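/- Let λ, α, M > 0 with M > √(λ/α), and let h(x) = αx² + η(|x| ≤ M). Then sup_{v ∈ ℝ}(x·v − max(h*(v) − λ, 0)) equals: 2√(λα)|x| if |x| ≤ √(λ/α); αx² + λ if √(λ/α) < |x| ≤ M; and +∞ if |x| > M. -/
import Mathlib

open Classical

noncomputable section

/-- Convex conjugate of a function `ℝ → EReal`. -/
def conj (ω : ℝ → EReal) (v : ℝ) : EReal := ⨆ x : ℝ, ((v * x : ℝ) : EReal) - ω x

/-- Convex indicator: `0` if the condition holds, `⊤` otherwise. -/
def ind (p : Prop) : EReal := if p then 0 else ⊤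

noncomputable def phi (α M v : ℝ) : ℝ :=
  if |v| ≤ 2*α*M then v^2/(4*α) else M*|v| - α*M^2

lemma coe_max' (a b : ℝ) : ((max a b : ℝ) : EReal) = max (a : EReal) (b : EReal) :=
  EReal.coe_strictMono.monotone.map_max

lemma conj_eq (α M : ℝ) (hα : 0 < α) (hM : 0 < M) (v : ℝ) :
    conj (fun t => ((α * t ^ 2 : ℝ) : EReal) + ind (|t| ≤ M)) v = ((phi α M v : ℝ) : EReal) := by
  unfold conj
  apply le_antisymm
  · apply iSup_le
    intro t
    by_cases ht : |t| ≤ M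
    · simp only [ind, ht, if_true, add_zero, ← EReal.coe_sub, EReal.coe_le_coe_iff]
      unfold phi
      have h1 : -|t| ≤ t := neg_abs_le t
      have h2 : t ≤ |t| := le_abs_self t
      have hvt : v * t ≤ |v| * |t| := by
        calc v * t ≤ |v * t| := le_abs_self _
        _ = |v| * |t| := abs_mul v t
      by_cases hv : |v| ≤ 2*α*M
      · simp only [hv, if_true]
        rw [le_div_iff₀ (by positivity)]
        nlinarith [sq_nonneg (2*α*t - v)]
      · simp only [hv, if_false]
        push_neg at hv
        have h3 : 0 ≤ |v| - 2*α*M := by linarith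
        have h4 : 0 ≤ M - |t| := by linarith
        nlinarith [mul_nonneg h3 h4, sq_nonneg (M - |t|), sq_abs t, abs_nonneg v, abs_nonneg t]
    · simp only [ind, ht, if_false]
      rw [EReal.coe_add_top, EReal.sub_top]
      exact bot_le
  · unfold phi
    by_cases hv : |v| ≤ 2*α*M
    · refine le_iSup_of_le (v/(2*α)) ?_
      have habs : |v/(2*α)| ≤ M := by
        rw [abs_div, abs_of_pos (by positivity : (0:ℝ) < 2*α)]
        rw [div_le_iff₀ (by positivity)]
        linarith [hv]
      simp only [ind, habs, if_true, add_zero, ← EReal.coe_sub, EReal.coe_le_coe_iff, hv, if_true]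
      have : v * (v/(2*α)) - α * (v/(2*α))^2 = v^2/(4*α) := by
        field_simp; ring
      linarith [this.ge]
    · push_neg at hv
      have hvne : v ≠ 0 := by
        intro h; rw [h] at hv; simp at hv; nlinarith
      set x₀ : ℝ := if 0 ≤ v then M else -M with hx₀
      have habs : |x₀| ≤ M := by
        rw [hx₀]; split <;> simp [abs_of_pos hM, abs_of_neg, hM.le, hM]
      have hvx : v * x₀ = |v| * M := by
        rw [hx₀]; split
        · rw [abs_of_nonneg ‹0 ≤ v›] <;> ring
        · rw [abs_of_neg (lt_of_not_ge ‹¬ 0 ≤ v›)] <;> ring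
      refine le_iSup_of_le x₀ ?_
      simp only [ind, habs, if_true, add_zero, ← EReal.coe_sub, EReal.coe_le_coe_iff,
        not_le.mpr hv, if_false]
      have hx2 : x₀^2 = M^2 := by rw [hx₀]; split <;> ring
      rw [hvx, hx2]
      nlinarith

set_option maxHeartbeats 1000000 in
theorem stmt_17 (lam α M : ℝ) (hlam : 0 < lam) (hα : 0 < α) (hM : 0 < M)
    (hMgt : Real.sqrt (lam / α) < M) :
    ∀ x : ℝ,
      (⨆ v : ℝ,
          ((x * v : ℝ) : EReal)
            - max (conj (fun t => ((α * t ^ 2 : ℝ) : EReal) + ind (|t| ≤ M)) v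
                - (lam : EReal)) 0)
        = if |x| ≤ Real.sqrt (lam / α) then
            ((2 * Real.sqrt (lam * α) * |x| : ℝ) : EReal)
          else if |x| ≤ M then ((α * x ^ 2 + lam : ℝ) : EReal)
          else ⊤ := by
  intro x
  set s := Real.sqrt (lam / α) with hs
  have hs0 : 0 < s := Real.sqrt_pos.mpr (by positivity)
  have hs2 : α * s^2 = lam := by
    have : s^2 = lam / α := Real.sq_sqrt (by positivity)
    rw [this]; field_simp
  have hr : Real.sqrt (lam * α) = α * s := by
    have h1 : lam * α = (α * s)^2 := by nlinarith
    rw [h1, Real.sqrt_sq (by positivity)]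
  set g : ℝ → ℝ := fun v => max (phi α M v - lam) 0 with hg
  have hbody : ∀ v : ℝ,
      ((x * v : ℝ) : EReal)
        - max (conj (fun t => ((α * t ^ 2 : ℝ) : EReal) + ind (|t| ≤ M)) v
            - (lam : EReal)) 0 = ((x * v - g v : ℝ) : EReal) := by
    intro v
    rw [conj_eq α M hα hM v, ← EReal.coe_sub, ← EReal.coe_zero, ← coe_max', ← EReal.coe_sub]
  simp only [hbody]
  -- bounds on g
  have hg_ge0 : ∀ v, 0 ≤ g v := fun v => le_max_right _ _
  have hg_ge : ∀ v, phi α M v - lam ≤ g v := fun v => le_max_left _ _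
  by_cases hx1 : |x| ≤ s
  · rw [if_pos hx1, hr]
    apply le_antisymm
    · apply iSup_le
      intro v
      rw [EReal.coe_le_coe_iff]
      have hxv : x * v ≤ |x| * |v| := by
        calc x * v ≤ |x * v| := le_abs_self _
        _ = |x| * |v| := abs_mul x v
      have hx0 : 0 ≤ |x| := abs_nonneg x
      have hv0 : 0 ≤ |v| := abs_nonneg v
      by_cases hv : |v| ≤ 2*α*M
      · have hφ : phi α M v = v^2/(4*α) := if_pos hv
        by_cases hv2 : |v| ≤ 2*α*s
        · have := hg_ge0 v
          nlinarith [mul_nonneg hx0 (by linarith : (0:ℝ) ≤ 2*α*s - |v|)]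
        · push_neg at hv2
          have := hg_ge v
          rw [hφ] at this
          have h5 : v^2 ≤ (g v + lam) * (4*α) := by
            rw [← div_le_iff₀ (by positivity)]; linarith
          have h1 : (0:ℝ) ≤ |v| - 2*α*s := by linarith
          have h2 : (0:ℝ) ≤ |v| - 2*α*|x| := by nlinarith
          have h3 : (0:ℝ) ≤ s - |x| := by linarith
          nlinarith [mul_nonneg h1 h2, mul_nonneg (mul_nonneg hα.le h3) h1, h5, sq_abs v]
      · push_neg at hv
        have hφ : phi α M v = M*|v| - α*M^2 := if_neg (not_le.mpr hv)
        have := hg_ge v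
        rw [hφ] at this
        have h1 : (0:ℝ) ≤ |v| - 2*α*M := by linarith
        have h2 : (0:ℝ) ≤ M - |x| := by linarith
        have h3 : (0:ℝ) ≤ M - s := by linarith
        have h4 : (0:ℝ) ≤ M + s - 2*|x| := by linarith
        nlinarith [mul_nonneg h1 h2, mul_nonneg h3 h4]
    · set v₀ : ℝ := if 0 ≤ x then 2*α*s else -(2*α*s) with hv₀
      have habs : |v₀| = 2*α*s := by
        rw [hv₀]; split
        · exact abs_of_pos (by positivity)
        · rw [abs_neg]; exact abs_of_pos (by positivity)
      have hxv : x * v₀ = 2*α*s*|x| := by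
        rw [hv₀]; split
        · rw [abs_of_nonneg ‹0 ≤ x›] <;> ring
        · rw [abs_of_neg (lt_of_not_ge ‹¬ 0 ≤ x›)] <;> ring
      have hφ : phi α M v₀ = lam := by
        unfold phi
        rw [habs, if_pos (by nlinarith)]
        have : v₀^2 = (2*α*s)^2 := by rw [← habs, sq_abs]
        rw [this]; field_simp; nlinarith
      have hgv : g v₀ = 0 := by rw [hg]; simp [hφ]
      refine le_iSup_of_le v₀ (le_of_eq ?_)
      rw [EReal.coe_eq_coe_iff, hgv, hxv]; ring
  · push_neg at hx1
    by_cases hx2 : |x| ≤ M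
    · rw [if_neg (not_le.mpr hx1), if_pos hx2]
      apply le_antisymm
      · apply iSup_le
        intro v
        rw [EReal.coe_le_coe_iff]
        have hxv : x * v ≤ |x| * |v| := by
          calc x * v ≤ |x * v| := le_abs_self _
          _ = |x| * |v| := abs_mul x v
        have hx0 : 0 ≤ |x| := abs_nonneg x
        have hv0 : 0 ≤ |v| := abs_nonneg v
        by_cases hv : |v| ≤ 2*α*M
        · have hφ : phi α M v = v^2/(4*α) := if_pos hv
          by_cases hv2 : |v| ≤ 2*α*s
          · have := hg_ge0 v
            nlinarith [mul_nonneg hx0 (by linarith : (0:ℝ) ≤ 2*α*s - |v|),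
              mul_nonneg hα.le (sq_nonneg (|x| - s)), sq_abs x]
          · have := hg_ge v
            rw [hφ] at this
            have h5 : v^2 ≤ (g v + lam) * (4*α) := by
              rw [← div_le_iff₀ (by positivity)]; linarith
            nlinarith [h5, sq_nonneg (2*α*x - v)]
        · push_neg at hv
          have hφ : phi α M v = M*|v| - α*M^2 := if_neg (not_le.mpr hv)
          have := hg_ge v
          rw [hφ] at this
          have h1 : (0:ℝ) ≤ |v| - 2*α*M := by linarith
          have h2 : (0:ℝ) ≤ M - |x| := by linarith
          nlinarith [mul_nonneg h1 h2, sq_nonneg (M - |x|), sq_abs x]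
      · refine le_iSup_of_le (2*α*x) (le_of_eq ?_)
        rw [EReal.coe_eq_coe_iff]
        have habs : |2*α*x| = 2*α*|x| := by
          rw [abs_mul, abs_of_pos (by positivity : (0:ℝ) < 2*α)]
        have hφ : phi α M (2*α*x) = α*x^2 := by
          unfold phi
          rw [habs, if_pos (by nlinarith)]
          field_simp; ring
        have hgv : g (2*α*x) = α*x^2 - lam := by
          rw [hg]; simp only [hφ]
          rw [max_eq_left]
          have h6 : s^2 < |x|^2 := by nlinarith [abs_nonneg x]
          nlinarith [sq_abs x, mul_lt_mul_of_pos_left h6 hα]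
        rw [hgv]; ring
    · push_neg at hx2
      rw [if_neg (not_le.mpr hx1), if_neg (not_le.mpr hx2)]
      rw [iSup_eq_top]
      intro b hb
      obtain ⟨c, hbc, -⟩ := EReal.exists_between_coe_real hb
      set t : ℝ := max (2*α*M) ((c+1)/(|x| - M)) with ht
      have ht1 : 2*α*M ≤ t := le_max_left _ _
      have ht2 : (c+1)/(|x| - M) ≤ t := le_max_right _ _
      have ht0 : 0 < t := lt_of_lt_of_le (by positivity) ht1
      set v : ℝ := if 0 ≤ x then t else -t with hv
      have habs : |v| = t := by
        rw [hv]; split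
        · exact abs_of_pos ht0
        · rw [abs_neg]; exact abs_of_pos ht0
      have hxv : x * v = |x| * t := by
        rw [hv]; split
        · rw [abs_of_nonneg ‹0 ≤ x›] <;> ring
        · rw [abs_of_neg (lt_of_not_ge ‹¬ 0 ≤ x›)] <;> ring
      have hφle : phi α M v ≤ M * t := by
        unfold phi
        rw [habs]
        split
        · rename_i h
          rw [div_le_iff₀ (by positivity)]
          have hv2 : v^2 = t^2 := by rw [← sq_abs, habs]
          nlinarith [mul_nonneg ht0.le (by linarith : (0:ℝ) ≤ 2*α*M - t)]
        · nlinarith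
      have hgle : g v ≤ M * t := by
        rw [hg]
        apply max_le
        · nlinarith [hφle]
        · positivity
      refine ⟨v, lt_trans hbc ?_⟩
      rw [EReal.coe_lt_coe_iff, hxv]
      have hMx : 0 < |x| - M := by linarith
      have : c + 1 ≤ t * (|x| - M) := by
        rw [div_le_iff₀ hMx] at ht2; linarith
      nlinarith [hgle]
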